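/- Let {Ĥ_n(·; d)} be the d-symmetric Appell sequence defined by Ĥ_n(x) = x^n for 0 ≤ n ≤ d and Ĥ_{n+d+1}(x) = x Ĥ_{n+d}(x) − (d+1)^{−1} C(n+d, d) Ĥ_n(x) for n ≥ 0, where C denotes the binomial coefficient. Then this sequence has the Appell property: (d/dx) Ĥ_{n+1}(x) = (n+1) Ĥ_n(x) for all n ≥ 0. -/

import Mathlib

open Polynomial

/-- The `d`-symmetric sequence `Ĥ_n` defined by `Ĥ_n = x^n` for `0 ≤ n ≤ d` and
`Ĥ_{n+d+1} = x Ĥ_{n+d} − (d+1)⁻¹ C(n+d, d) Ĥ_n` has the Appell property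
`Ĥ_{n+1}' = (n+1) Ĥ_n`. -/
theorem hermite_type_appell (d : ℕ) (hd : 1 ≤ d) (H : ℕ → Polynomial ℝ)
    (hinit : ∀ n ≤ d, H n = X ^ n)
    (hrec : ∀ n : ℕ, H (n + d + 1) =
      X * H (n + d) - C (((d : ℝ) + 1)⁻¹ * (Nat.choose (n + d) d : ℝ)) * H n) :
    ∀ n : ℕ, derivative (H (n + 1)) = C ((n : ℝ) + 1) * H n := by
  intro n
  induction n using Nat.strong_induction_on with
  | _ n ih =>
    rcases le_or_gt (n + 1) d with h | h
    · rw [hinit (n + 1) h, hinit n (by omega), derivative_X_pow]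
      push_cast
      ring_nf
    · obtain ⟨m, rfl⟩ : ∃ m, n = m + d := ⟨n - d, by omega⟩
      have hrec' : H (m + d + 1) = X * H (m + d)
          - C (((d : ℝ) + 1)⁻¹ * (Nat.choose (m + d) d : ℝ)) * H m := hrec m
      rcases Nat.eq_zero_or_pos m with rfl | hm
      · simp only [Nat.zero_add] at hrec' ⊢
        have hdd : derivative (H d) = C (((d - 1 : ℕ) : ℝ) + 1) * H (d - 1) := by
          have := ih (d - 1) (by omega)
          rwa [Nat.sub_add_cancel hd] at this
        rw [hrec', hinit 0 (by omega), hinit d le_rfl, hinit (d - 1) (by omega)] at *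
        rw [derivative_sub, derivative_mul, derivative_X, hdd]
        have hX : X * ((X : Polynomial ℝ) ^ (d - 1)) = X ^ d := by
          rw [← pow_succ']
          congr 1
          omega
        simp only [pow_zero, mul_one, derivative_one, mul_zero, sub_zero, one_mul]
        rw [mul_comm (C (((d - 1 : ℕ) : ℝ) + 1)) (X ^ (d-1)), ← mul_assoc, hX]
        have : (((d - 1 : ℕ) : ℝ) + 1) = (d : ℝ) := by
          have : ((d - 1 : ℕ) : ℝ) = (d : ℝ) - 1 := by
            push_cast [Nat.cast_sub hd]; ring
          rw [this]; ring
        rw [this]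
        simp [derivative_C]
        ring
      · obtain ⟨k, rfl⟩ : ∃ k, m = k + 1 := ⟨m - 1, by omega⟩
        have e1 : derivative (H (k + d + 1)) = C (((k + d : ℕ) : ℝ) + 1) * H (k + d) :=
          ih (k + d) (by omega)
        have e2 : derivative (H (k + 1)) = C ((k : ℝ) + 1) * H k := ih k (by omega)
        have hrk : H (k + d + 1) = X * H (k + d)
            - C (((d : ℝ) + 1)⁻¹ * (Nat.choose (k + d) d : ℝ)) * H k := hrec k
        have idx : k + 1 + d = k + d + 1 := by omega
        rw [idx] at hrec' ⊢
        rw [hrec', derivative_sub, derivative_mul, derivative_X, derivative_mul,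
          derivative_C, zero_mul, zero_add, e1, e2, hrk]
        have hchoose : (k + 1) * Nat.choose (k + d + 1) d
            = (k + d + 1) * Nat.choose (k + d) d := by
          have h1 : Nat.choose (k + d) d = Nat.choose (k + d) k :=
            (Nat.choose_symm_of_eq_add (by omega)).symm
          have h2 : Nat.choose (k + d + 1) d = Nat.choose (k + d + 1) (k + 1) :=
            (Nat.choose_symm_of_eq_add (by omega)).symm
          have h3 := Nat.add_one_mul_choose_eq (k + d) k
          try simp only [Nat.succ_eq_add_one] at h3
          rw [h1, h2, h3]
          ring
        have hcoef : ((k : ℝ) + 1) * (((d : ℝ) + 1)⁻¹ * (Nat.choose (k + d + 1) d : ℝ))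
            = ((k : ℝ) + (d : ℝ) + 1) * (((d : ℝ) + 1)⁻¹ * (Nat.choose (k + d) d : ℝ)) := by
          have h := congrArg (fun x : ℕ => (x : ℝ)) hchoose
          push_cast at h
          have hne : ((d : ℝ) + 1) ≠ 0 := by positivity
          field_simp
          linarith [h]
        have hC : C ((k : ℝ) + 1) * C (((d : ℝ) + 1)⁻¹ * (Nat.choose (k + d + 1) d : ℝ))
            = C ((k : ℝ) + (d : ℝ) + 1) * C (((d : ℝ) + 1)⁻¹ * (Nat.choose (k + d) d : ℝ)) := by
          rw [← map_mul, ← map_mul, hcoef]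
        simp only [map_add, map_one, map_natCast] at hC ⊢
        push_cast
        linear_combination (-(H k)) * hC
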